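/- Let Ω ⊂ ℝⁿ be the image of the canonical simplex Δ under the affine map x = A⁻¹y + a with A a nonsingular n×n real matrix and a ∈ ℝⁿ. Let f be a polynomial of degree t and set g(y) := f(A⁻¹y + a), written g = Σ_{j=0}^t g_j with g_j homogeneous of degree j. Then ∫_Ω f(x) dx = (1/|det A|) · (1/n!) · (ĝ₀ + Σ_{j=1}^t ĝ_j(ξ_j)), where ξ_j = e/((n+1)⋯(n+j))^{1/j} and ĝ_j is the Bombieri polynomial of g_j. -/

import Mathlib

open MeasureTheory Finset

/-- The Bombieri polynomial of `p`, evaluated at `x`. -/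
noncomputable def bombieriEval {n : ℕ} (p : MvPolynomial (Fin n) ℝ) (x : Fin n → ℝ) : ℝ :=
  ∑ α ∈ p.support, (∏ i, (Nat.factorial (α i) : ℝ)) * p.coeff α * ∏ i, x i ^ α i


lemma nat_prod_asc (a : ℕ) : ∀ k : ℕ, a.factorial * ∏ j ∈ Finset.range k, (a + 1 + j) = (a + k).factorial
  | 0 => by simp
  | (k+1) => by
      rw [Finset.prod_range_succ, ← mul_assoc, nat_prod_asc a k]
      rw [show a + (k+1) = (a + k) + 1 by ring, Nat.factorial_succ]
      ring

lemma beta_nat (a b : ℕ) {r : ℝ} (hr : 0 < r) :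
    ∫ x in (0:ℝ)..r, x ^ a * (r - x) ^ b
      = r ^ (a + b + 1) * (a.factorial * b.factorial / (a + b + 1).factorial) := by
  have hu : 0 < Complex.re ((a : ℂ) + 1) := by
    simp only [Complex.add_re, Complex.natCast_re, Complex.one_re]
    positivity
  have h1 := Complex.betaIntegral_scaled ((a : ℂ) + 1) ((b : ℂ) + 1) hr
  have h2 := Complex.betaIntegral_eval_nat_add_one_right hu b
  rw [h2] at h1
  have hprod : (∏ j ∈ Finset.range (b + 1), ((a : ℂ) + 1 + j))
      = ((a + b + 1).factorial : ℂ) / (a.factorial : ℂ) := by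
    have h3 : ((a.factorial : ℂ)) * ∏ j ∈ Finset.range (b + 1), ((a : ℂ) + 1 + j)
        = ((a + (b+1)).factorial : ℂ) := by
      rw [← nat_prod_asc a (b + 1)]; push_cast; ring_nf
    rw [eq_div_iff (by exact_mod_cast a.factorial_ne_zero)]
    rw [mul_comm] at h3
    rw [h3]; norm_cast
  rw [hprod] at h1
  -- simplify exponents in h1
  have e1 : ((a : ℂ) + 1 - 1) = ((a : ℕ) : ℂ) := by ring
  have e2 : ((b : ℂ) + 1 - 1) = ((b : ℕ) : ℂ) := by ring
  have e3 : ((a : ℂ) + 1 + ((b : ℂ) + 1) - 1) = (((a + b + 1 : ℕ)) : ℂ) := by push_cast; ring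
  rw [e1, e2, e3] at h1
  simp only [Complex.cpow_natCast] at h1
  have h4 : (∫ x in (0:ℝ)..r, ((x ^ a * (r - x) ^ b : ℝ) : ℂ))
      = ((r : ℂ)) ^ (a + b + 1) * (↑b.factorial / (↑(a + b + 1).factorial / ↑a.factorial)) := by
    rw [← h1]
    congr 1
    ext x
    push_cast
    ring
  rw [intervalIntegral.integral_ofReal] at h4
  have h5 : ((r ^ (a + b + 1) * (a.factorial * b.factorial / (a + b + 1).factorial) : ℝ) : ℂ)
      = ((r : ℂ)) ^ (a + b + 1) * (↑b.factorial / (↑(a + b + 1).factorial / ↑a.factorial)) := by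
    push_cast
    rw [div_div_eq_mul_div]
    ring
  exact_mod_cast h4.trans h5.symm


def stdSet (n : ℕ) (r : ℝ) : Set (Fin n → ℝ) := {y | (∀ i, 0 ≤ y i) ∧ ∑ i, y i ≤ r}

lemma isClosed_stdSet (n : ℕ) (r : ℝ) : IsClosed (stdSet n r) := by
  have h1 : IsClosed {y : Fin n → ℝ | ∀ i, 0 ≤ y i} := by
    have : {y : Fin n → ℝ | ∀ i, 0 ≤ y i} = ⋂ i, {y | 0 ≤ y i} := by ext y; simp
    rw [this]
    exact isClosed_iInter fun i => isClosed_le continuous_const (continuous_apply i)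
  have h2 : IsClosed {y : Fin n → ℝ | ∑ i, y i ≤ r} :=
    isClosed_le (by fun_prop) continuous_const
  have : stdSet n r = {y : Fin n → ℝ | ∀ i, 0 ≤ y i} ∩ {y | ∑ i, y i ≤ r} := rfl
  rw [this]
  exact h1.inter h2

lemma stdSet_subset_Icc (n : ℕ) (r : ℝ) :
    stdSet n r ⊆ Set.Icc 0 (fun _ => max r 0) := by
  rintro y ⟨h0, hs⟩
  refine ⟨fun i => h0 i, fun i => ?_⟩
  calc y i ≤ ∑ j, y j := Finset.single_le_sum (fun j _ => h0 j) (Finset.mem_univ i)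
  _ ≤ r := hs
  _ ≤ max r 0 := le_max_left _ _

lemma isCompact_stdSet (n : ℕ) (r : ℝ) : IsCompact (stdSet n r) :=
  isCompact_Icc.of_isClosed_subset (isClosed_stdSet n r) (stdSet_subset_Icc n r)

lemma stdSet_empty {n : ℕ} {r : ℝ} (hr : r < 0) : stdSet n r = ∅ := by
  ext y
  simp only [stdSet, Set.mem_setOf_eq, Set.mem_empty_iff_false, iff_false, not_and]
  intro h0
  exact fun hs => absurd (Finset.sum_nonneg fun i _ => h0 i) (by linarith)

lemma integral_monomial_stdSet : ∀ (n : ℕ) (α : Fin n → ℕ) {r : ℝ}, 0 ≤ r →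
    (∫ y in stdSet n r, ∏ i, y i ^ α i)
      = r ^ (n + ∑ i, α i) * (∏ i, ((α i).factorial : ℝ)) / ((n + ∑ i, α i).factorial : ℝ)
  | 0, α, r, hr => by
    have h : stdSet 0 r = Set.univ := by
      ext y; simp [stdSet, hr]
    rw [h]
    have hv : (volume : Measure (Fin 0 → ℝ)) Set.univ = 1 := by
      rw [volume_pi, ← Set.pi_univ Set.univ, Measure.pi_pi]
      simp
    simp [measureReal_def, hv]
  | (n+1), α, r, hr => by
    classical
    have hsum : ∑ i, α i = α 0 + ∑ j, α (Fin.succ j) := Fin.sum_univ_succ α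
    set a : ℕ := α 0 with ha
    set β : Fin n → ℕ := fun j => α (Fin.succ j) with hβ
    set b : ℕ := n + ∑ j, β j with hb
    set C : ℝ := (∏ j, ((β j).factorial : ℝ)) / (b.factorial : ℝ) with hC
    set G : ℝ × (Fin n → ℝ) → ℝ := fun p => p.1 ^ a * ∏ j, p.2 j ^ β j with hG
    set T : Set (ℝ × (Fin n → ℝ)) :=
      {p | (0 ≤ p.1 ∧ ∀ j, 0 ≤ p.2 j) ∧ p.1 + ∑ j, p.2 j ≤ r} with hT
    set e := MeasurableEquiv.piFinSuccAbove (fun _ : Fin (n+1) => ℝ) 0 with he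
    have mp : MeasurePreserving e.symm
        ((volume : Measure ℝ).prod (Measure.pi fun _ : Fin n => volume))
        (Measure.pi fun _ : Fin (n+1) => (volume : Measure ℝ)) :=
      (measurePreserving_piFinSuccAbove (fun _ : Fin (n+1) => (volume : Measure ℝ)) 0).symm
    have hesymm : ∀ p : ℝ × (Fin n → ℝ), e.symm p = Fin.cons p.1 p.2 := by
      intro p
      simp only [he, MeasurableEquiv.piFinSuccAbove_symm_apply, Fin.insertNthEquiv_zero]
      rfl
    have hpre : e.symm ⁻¹' (stdSet (n+1) r) = T := by
      ext p
      simp only [Set.mem_preimage, hesymm, stdSet, Set.mem_setOf_eq, hT,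
        Fin.forall_fin_succ, Fin.cons_zero, Fin.cons_succ, Fin.sum_univ_succ]
    have hTclosed : IsClosed T := by
      have h1 : IsClosed {p : ℝ × (Fin n → ℝ) | 0 ≤ p.1} :=
        isClosed_le continuous_const continuous_fst
      have h2 : IsClosed {p : ℝ × (Fin n → ℝ) | ∀ j, 0 ≤ p.2 j} := by
        have : {p : ℝ × (Fin n → ℝ) | ∀ j, 0 ≤ p.2 j} = ⋂ j, {p | 0 ≤ p.2 j} := by ext p; simp
        rw [this]
        exact isClosed_iInter fun j =>
          isClosed_le continuous_const ((continuous_apply j).comp continuous_snd)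
      have h3 : IsClosed {p : ℝ × (Fin n → ℝ) | p.1 + ∑ j, p.2 j ≤ r} :=
        isClosed_le (by fun_prop) continuous_const
      have : T = ({p | 0 ≤ p.1} ∩ {p : ℝ × (Fin n → ℝ) | ∀ j, 0 ≤ p.2 j}) ∩
          {p | p.1 + ∑ j, p.2 j ≤ r} := by
        ext p; simp [hT, and_assoc]
      rw [this]
      exact (h1.inter h2).inter h3
    have hTcompact : IsCompact T := by
      refine (isCompact_Icc (a := ((0:ℝ), (0 : Fin n → ℝ))) (b := (r, fun _ => r))).of_isClosed_subset
        hTclosed ?_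
      rintro ⟨x, z⟩ ⟨⟨hx0, hz0⟩, hs⟩
      have hzs : 0 ≤ ∑ j, z j := Finset.sum_nonneg fun j _ => hz0 j
      constructor
      · exact ⟨hx0, fun j => hz0 j⟩
      · constructor
        · dsimp only; linarith
        · intro j
          dsimp only
          have : z j ≤ ∑ k, z k := Finset.single_le_sum (fun k _ => hz0 k) (Finset.mem_univ j)
          linarith
    have hGcont : Continuous G := by fun_prop
    have hTmeas : MeasurableSet T := hTclosed.measurableSet
    have hswap : (∫ y in stdSet (n+1) r, ∏ i, y i ^ α i ∂(volume))
        = ∫ p in T, G p ∂((volume : Measure ℝ).prod (Measure.pi fun _ : Fin n => volume)) := by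
      rw [volume_pi, ← mp.setIntegral_preimage_emb e.symm.measurableEmbedding
        (fun y => ∏ i, y i ^ α i) (stdSet (n+1) r), hpre]
      refine setIntegral_congr_fun hTmeas ?_
      intro p _
      dsimp only
      rw [hesymm]
      simp [hG, Fin.prod_univ_succ]
      rfl
    have hint : Integrable (T.indicator G)
        ((volume : Measure ℝ).prod (Measure.pi fun _ : Fin n => volume)) := by
      refine (hGcont.continuousOn.integrableOn_compact hTcompact).integrable_indicator hTmeas
    rw [hswap, ← integral_indicator hTmeas, integral_prod _ hint]
    have inner : ∀ x : ℝ,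
        (∫ z, T.indicator G (x, z) ∂(Measure.pi fun _ : Fin n => volume))
          = Set.indicator (Set.Icc (0:ℝ) r) (fun x => x ^ a * (r - x) ^ b * C) x := by
      intro x
      by_cases hx0 : 0 ≤ x
      · by_cases hxr : x ≤ r
        · have hsec : (fun z : Fin n → ℝ => T.indicator G (x, z))
              = (stdSet n (r - x)).indicator (fun z => x ^ a * ∏ j, z j ^ β j) := by
            funext z
            by_cases hz : z ∈ stdSet n (r - x)
            · have hmem : (x, z) ∈ T := ⟨⟨hx0, hz.1⟩, by have := hz.2; dsimp only; linarith⟩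
              rw [Set.indicator_of_mem hmem, Set.indicator_of_mem hz]
            · have hmem : (x, z) ∉ T := by
                intro hmem
                exact hz ⟨hmem.1.2, by have := hmem.2; dsimp only at this ⊢; linarith⟩
              rw [Set.indicator_of_notMem hmem, Set.indicator_of_notMem hz]
          rw [hsec, integral_indicator (isClosed_stdSet n (r - x)).measurableSet]
          rw [← volume_pi, integral_const_mul,
            integral_monomial_stdSet n β (by linarith)]
          rw [Set.indicator_of_mem (Set.mem_Icc.mpr ⟨hx0, hxr⟩)]
          rw [← hb, hC]
          ring
        · have hsec : (fun z : Fin n → ℝ => T.indicator G (x, z)) = fun _ => (0:ℝ) := by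
            funext z
            refine Set.indicator_of_notMem ?_ _
            rintro ⟨⟨_, hz0⟩, hs⟩
            have hzs : 0 ≤ ∑ j, z j := Finset.sum_nonneg fun j _ => hz0 j
            dsimp only at hs
            linarith
          rw [hsec, integral_zero, Set.indicator_of_notMem (by simp [hxr])]
      · have hsec : (fun z : Fin n → ℝ => T.indicator G (x, z)) = fun _ => (0:ℝ) := by
          funext z
          refine Set.indicator_of_notMem ?_ _
          rintro ⟨⟨hx, _⟩, _⟩
          exact hx0 hx
        rw [hsec, integral_zero, Set.indicator_of_notMem (by simp [hx0])]
    rw [show (fun x => ∫ z, T.indicator G (x, z) ∂(Measure.pi fun _ : Fin n => volume))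
        = Set.indicator (Set.Icc (0:ℝ) r) (fun x => x ^ a * (r - x) ^ b * C) from funext inner]
    rw [integral_indicator measurableSet_Icc, integral_Icc_eq_integral_Ioc,
      ← intervalIntegral.integral_of_le hr]
    rcases eq_or_lt_of_le hr with h0 | h0
    · rw [← h0, intervalIntegral.integral_same]
      rw [eq_comm, div_eq_zero_iff]
      left
      rw [mul_eq_zero]
      left
      exact zero_pow (by positivity)
    · rw [intervalIntegral.integral_mul_const, beta_nat a b h0]
      have hprodfact : (∏ i, ((α i).factorial : ℝ))
          = (a.factorial : ℝ) * ∏ j, ((β j).factorial : ℝ) := by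
        rw [Fin.prod_univ_succ]
      have hexp : a + b + 1 = n + 1 + ∑ i, α i := by
        rw [hsum, hb]; ring
      rw [hC, hprodfact, ← hexp]
      have hbne : (b.factorial : ℝ) ≠ 0 := Nat.cast_ne_zero.mpr b.factorial_ne_zero
      have habne : ((a + b + 1).factorial : ℝ) ≠ 0 := Nat.cast_ne_zero.mpr (a+b+1).factorial_ne_zero
      field_simp

lemma hom_sum_univ {n j : ℕ} {p : MvPolynomial (Fin n) ℝ} (hp : p.IsHomogeneous j)
    {d : Fin n →₀ ℕ} (hd : MvPolynomial.coeff d p ≠ 0) : ∑ i, d i = j := by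
  have h := hp hd
  rw [← h, Finsupp.weight_apply, Finsupp.sum_fintype]
  · simp
  · intro i; simp

lemma integrableOn_monomial_stdSet {n : ℕ} (α : Fin n → ℕ) (r : ℝ) :
    IntegrableOn (fun y : Fin n → ℝ => ∏ i, y i ^ α i) (stdSet n r) volume :=
  (Continuous.continuousOn (by fun_prop)).integrableOn_compact (isCompact_stdSet n r)

lemma integrableOn_eval_stdSet {n : ℕ} (p : MvPolynomial (Fin n) ℝ) (r : ℝ) :
    IntegrableOn (fun y : Fin n → ℝ => MvPolynomial.eval y p) (stdSet n r) volume :=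
  (MvPolynomial.continuous_eval p).continuousOn.integrableOn_compact (isCompact_stdSet n r)

lemma integral_eval_hom {n j : ℕ} (p : MvPolynomial (Fin n) ℝ) (hp : p.IsHomogeneous j) :
    (∫ y in stdSet n 1, MvPolynomial.eval y p)
      = (∑ d ∈ p.support, (∏ i, ((d i).factorial : ℝ)) * p.coeff d) / ((n + j).factorial : ℝ) := by
  have heval : ∀ y : Fin n → ℝ, MvPolynomial.eval y p
      = ∑ d ∈ p.support, p.coeff d * ∏ i, y i ^ d i := fun y => MvPolynomial.eval_eq' _ _
  rw [setIntegral_congr_fun (isClosed_stdSet n 1).measurableSet fun y _ => heval y]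
  rw [integral_finset_sum _ (fun d _ =>
    ((integrableOn_monomial_stdSet (fun i => d i) 1).const_mul (p.coeff d) :))]
  rw [Finset.sum_div]
  refine Finset.sum_congr rfl fun d hd => ?_
  rw [integral_const_mul, integral_monomial_stdSet n (fun i => d i) (by norm_num : (0:ℝ) ≤ 1)]
  rw [hom_sum_univ hp (MvPolynomial.mem_support_iff.mp hd)]
  rw [one_pow]
  ring

theorem integral_poly_arbitrary_simplex (n t : ℕ) (A : Matrix (Fin n) (Fin n) ℝ)
    (hA : IsUnit A.det) (a : Fin n → ℝ)
    (f : MvPolynomial (Fin n) ℝ) (g : ℕ → MvPolynomial (Fin n) ℝ)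
    (hg : ∀ j, (g j).IsHomogeneous j)
    (hgf : ∀ y : Fin n → ℝ,
      MvPolynomial.eval y (∑ j ∈ Finset.range (t + 1), g j) =
        MvPolynomial.eval (A⁻¹.mulVec y + a) f) :
    ∫ x in {x : Fin n → ℝ |
        (∀ i, 0 ≤ A.mulVec (x - a) i) ∧ ∑ i, A.mulVec (x - a) i ≤ 1},
      MvPolynomial.eval x f =
      (1 / |A.det|) * (1 / (Nat.factorial n : ℝ)) *
        (MvPolynomial.coeff 0 (g 0) +
          ∑ j ∈ Finset.Icc 1 t,
            bombieriEval (g j)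
              (fun _ => ((∏ k ∈ Finset.range j, (n + 1 + k : ℝ)) ^ ((1 : ℝ) / j))⁻¹)) := by
  classical
  set S := stdSet n 1 with hS
  set φ : (Fin n → ℝ) → (Fin n → ℝ) := fun y => A⁻¹.mulVec y + a with hφ
  have hAA : A * A⁻¹ = 1 := Matrix.mul_nonsing_inv A hA
  have hA'A : A⁻¹ * A = 1 := Matrix.nonsing_inv_mul A hA
  have hφval : ∀ y, A.mulVec (φ y - a) = y := by
    intro y
    simp only [hφ, add_sub_cancel_right, Matrix.mulVec_mulVec, hAA, Matrix.one_mulVec]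
  have himg : {x : Fin n → ℝ | (∀ i, 0 ≤ A.mulVec (x - a) i) ∧ ∑ i, A.mulVec (x - a) i ≤ 1}
      = φ '' S := by
    ext x
    constructor
    · rintro ⟨h1, h2⟩
      refine ⟨A.mulVec (x - a), ⟨h1, h2⟩, ?_⟩
      simp only [hφ, Matrix.mulVec_mulVec, hA'A, Matrix.one_mulVec, sub_add_cancel]
    · rintro ⟨y, hy, rfl⟩
      constructor
      · intro i; rw [hφval]; exact hy.1 i
      · rw [hφval]; exact hy.2
  set L : (Fin n → ℝ) →L[ℝ] (Fin n → ℝ) :=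
    LinearMap.toContinuousLinearMap (Matrix.toLin' A⁻¹) with hL
  have hLdet : L.det = A⁻¹.det := by
    simp [hL, ContinuousLinearMap.det, LinearMap.det_toLin']
  have hφL : φ = fun y => L y + a := by
    funext y
    simp [hφ, hL, Matrix.toLin'_apply]
  have hderiv : ∀ y ∈ S, HasFDerivWithinAt φ L S y := by
    intro y _
    have h : HasFDerivAt (fun y => L y + a) L y := (L.hasFDerivAt (x := y)).add_const a
    rw [← hφL] at h
    exact h.hasFDerivWithinAt
  have hinj : Set.InjOn φ S := by
    intro y1 _ y2 _ h
    have h2 := congrArg (fun x => A.mulVec (x - a)) h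
    simpa only [hφval] using h2
  rw [himg]
  rw [MeasureTheory.integral_image_eq_integral_abs_det_fderiv_smul volume
    (isClosed_stdSet n 1).measurableSet hderiv hinj (fun x => MvPolynomial.eval x f)]
  have habs : |L.det| = |A.det|⁻¹ := by
    rw [hLdet, Matrix.det_nonsing_inv, Ring.inverse_eq_inv', abs_inv]
  simp_rw [habs, smul_eq_mul]
  rw [integral_const_mul]
  have hsubst : ∀ y ∈ S, MvPolynomial.eval (φ y) f
      = ∑ j ∈ Finset.range (t+1), MvPolynomial.eval y (g j) := by
    intro y _
    rw [hφ, ← hgf y, map_sum]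
  rw [setIntegral_congr_fun (isClosed_stdSet n 1).measurableSet hsubst]
  rw [integral_finset_sum _ (fun j _ => integrableOn_eval_stdSet (g j) 1)]
  have hterm : ∀ j, (∫ y in S, MvPolynomial.eval y (g j))
      = (∑ d ∈ (g j).support, (∏ i, ((d i).factorial : ℝ)) * (g j).coeff d)
          / ((n + j).factorial : ℝ) := fun j => integral_eval_hom (g j) (hg j)
  have hsplit : Finset.range (t+1) = insert 0 (Finset.Icc 1 t) := by
    ext k; simp [Nat.lt_succ_iff]; omega
  rw [hsplit, Finset.sum_insert (by simp)]
  have h0 : (∫ y in S, MvPolynomial.eval y (g 0))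
      = MvPolynomial.coeff 0 (g 0) / (n.factorial : ℝ) := by
    rw [hterm 0]
    have hsub0 : (g 0).support ⊆ {0} := by
      intro d hd
      have hsum := hom_sum_univ (hg 0) (MvPolynomial.mem_support_iff.mp hd)
      simp only [Finset.mem_singleton]
      ext i
      have hle : d i ≤ ∑ i', d i' :=
        Finset.single_le_sum (f := fun i => d i) (fun _ _ => Nat.zero_le _) (mem_univ i)
      simp only [Finsupp.coe_zero, Pi.zero_apply]
      omega
    rw [Finset.sum_subset hsub0 (fun d _ hd => by
      simp [MvPolynomial.notMem_support_iff.mp hd])]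
    simp
  have h1 : ∀ j ∈ Finset.Icc 1 t, (∫ y in S, MvPolynomial.eval y (g j))
      = (1 / (n.factorial : ℝ)) * bombieriEval (g j)
          (fun _ => ((∏ k ∈ Finset.range j, (n + 1 + k : ℝ)) ^ ((1:ℝ)/j))⁻¹) := by
    intro j hj
    have hj1 : 1 ≤ j := (Finset.mem_Icc.mp hj).1
    set P : ℝ := ∏ k ∈ Finset.range j, (n + 1 + k : ℝ) with hPdef
    have hPpos : 0 < P := Finset.prod_pos (fun k _ => by positivity)
    have hPfac : (n.factorial : ℝ) * P = ((n + j).factorial : ℝ) := by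
      rw [← nat_prod_asc n j]
      push_cast
      ring
    set c : ℝ := (P ^ ((1:ℝ)/j))⁻¹ with hc
    have hjne : (j : ℝ) ≠ 0 := by positivity
    have hcj : c ^ j = P⁻¹ := by
      rw [hc, inv_pow, ← Real.rpow_natCast (P ^ ((1:ℝ)/j)) j, ← Real.rpow_mul hPpos.le]
      rw [one_div, inv_mul_cancel₀ hjne, Real.rpow_one]
    rw [hterm j, bombieriEval]
    have hcong : ∀ d ∈ (g j).support,
        (∏ i, ((d i).factorial : ℝ)) * (g j).coeff d * ∏ i : Fin n, c ^ d i
          = (∏ i, ((d i).factorial : ℝ)) * (g j).coeff d * P⁻¹ := by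
      intro d hd
      rw [Finset.prod_pow_eq_pow_sum, hom_sum_univ (hg j) (MvPolynomial.mem_support_iff.mp hd),
        hcj]
    rw [Finset.sum_congr rfl hcong, ← Finset.sum_mul]
    rw [← hPfac]
    have hnfac : (n.factorial : ℝ) ≠ 0 := Nat.cast_ne_zero.mpr n.factorial_ne_zero
    field_simp
  rw [h0, Finset.sum_congr rfl h1, ← Finset.mul_sum]
  rw [one_div, one_div]
  ring
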